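/- The word x y² x is an isoterm for the monoid M(ab²a, a²b²): if M(ab²a, a²b²) satisfies an identity xy²x ≈ v, then v = xy²x as words. -/

import Mathlib

open scoped Classical

def Fac (W : Set (List ℕ)) (u : List ℕ) : Prop := u = [] ∨ ∃ w ∈ W, u <:+: w

lemma Fac.of_infix {W : Set (List ℕ)} {u v : List ℕ} (h : Fac W u) (hv : v <:+: u) :
    Fac W v := by
  rcases h with rfl | ⟨w, hw, hu⟩
  · left; simpa using hv
  · exact Or.inr ⟨w, hw, hv.trans hu⟩

def MWord (W : Set (List ℕ)) : Type := Option {u : List ℕ // Fac W u}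

noncomputable def mwMul {W : Set (List ℕ)} : MWord W → MWord W → MWord W
  | some a, some b =>
      if h : Fac W (a.1 ++ b.1) then some ⟨a.1 ++ b.1, h⟩ else none
  | _, _ => none

lemma mwMul_none_left {W : Set (List ℕ)} (b : MWord W) : mwMul none b = none := by
  cases b <;> rfl

lemma mwMul_none_right {W : Set (List ℕ)} (a : MWord W) : mwMul a none = none := by
  cases a <;> rfl

lemma mwMul_some_some {W : Set (List ℕ)} (a b : {u : List ℕ // Fac W u}) :
    mwMul (some a) (some b) =
      if h : Fac W (a.1 ++ b.1) then some ⟨a.1 ++ b.1, h⟩ else none := rfl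

noncomputable instance MWord.monoid (W : Set (List ℕ)) : Monoid (MWord W) where
  mul := mwMul
  one := some ⟨[], Or.inl rfl⟩
  one_mul a := by
    show mwMul (some ⟨[], Or.inl rfl⟩) a = a
    cases a with
    | none => rfl
    | some a => exact dif_pos a.2
  mul_one a := by
    show mwMul a (some ⟨[], Or.inl rfl⟩) = a
    cases a with
    | none => rfl
    | some a =>
      have h : Fac W (a.1 ++ []) := by simpa using a.2
      rw [mwMul_some_some, dif_pos h]
      exact congrArg some (Subtype.ext (List.append_nil _))
  mul_assoc a b c := by
    show mwMul (mwMul a b) c = mwMul a (mwMul b c)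
    cases a with
    | none => exact (congrArg (mwMul · c) (mwMul_none_left b)).trans
                ((mwMul_none_left c).trans (mwMul_none_left _).symm)
    | some a =>
      cases b with
      | none => exact (congrArg (mwMul · c) (mwMul_none_right _)).trans ((mwMul_none_left c).trans
                  ((congrArg (mwMul (some a)) (mwMul_none_left c)).trans (mwMul_none_right _)).symm)
      | some b =>
        cases c with
        | none => exact (mwMul_none_right _).trans
                    ((congrArg (mwMul (some a)) (mwMul_none_right _)).trans (mwMul_none_right _)).symm
        | some c =>
          by_cases hab : Fac W (a.1 ++ b.1)
          · by_cases hbc : Fac W (b.1 ++ c.1)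
            · rw [mwMul_some_some b c, dif_pos hbc, mwMul_some_some a b, dif_pos hab,
                mwMul_some_some, mwMul_some_some]
              by_cases habc : Fac W (a.1 ++ b.1 ++ c.1)
              · have habc' : Fac W (a.1 ++ (b.1 ++ c.1)) := by
                  rwa [← List.append_assoc]
                rw [dif_pos habc, dif_pos habc']
                exact congrArg some (Subtype.ext (List.append_assoc _ _ _))
              · have habc' : ¬ Fac W (a.1 ++ (b.1 ++ c.1)) := by
                  rwa [← List.append_assoc]
                rw [dif_neg habc, dif_neg habc']
            · rw [mwMul_some_some b c, dif_neg hbc]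
              erw [mwMul_none_right]
              rw [
                mwMul_some_some a b, dif_pos hab, mwMul_some_some]
              have : ¬ Fac W (a.1 ++ b.1 ++ c.1) := fun h =>
                hbc (h.of_infix (by rw [List.append_assoc]; exact
                  (List.suffix_append a.1 (b.1 ++ c.1)).isInfix))
              rw [dif_neg this]
          · rw [mwMul_some_some a b, dif_neg hab]
            erw [mwMul_none_left]
            cases hc : mwMul (some b) (some c) with
            | none => exact (mwMul_none_right _).symm
            | some bc =>
              rw [mwMul_some_some]
              have hbc : bc.1 = b.1 ++ c.1 := by
                rw [mwMul_some_some] at hc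
                by_cases h : Fac W (b.1 ++ c.1)
                · rw [dif_pos h] at hc; cases hc; rfl
                · rw [dif_neg h] at hc; cases hc
              have : ¬ Fac W (a.1 ++ bc.1) := by
                rw [hbc]
                exact fun h => hab (h.of_infix (by
                  rw [← List.append_assoc]
                  exact (List.prefix_append (a.1 ++ b.1) c.1).isInfix))
              rw [dif_neg this]

/-- A monoid `M` satisfies the identity `u ≈ v` if every substitution of elements of
`M` for the variables makes the two sides equal. -/
def SatM (M : Type*) [Monoid M] (u v : List ℕ) : Prop :=
  ∀ f : ℕ → M, (u.map f).prod = (v.map f).prod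

noncomputable def emb (W : Set (List ℕ)) (u : List ℕ) : MWord W :=
  if h : Fac W u then some ⟨u, h⟩ else none

lemma emb_nil (W : Set (List ℕ)) : emb W [] = (1 : MWord W) := by
  unfold emb; erw [dif_pos (show Fac W [] from Or.inl rfl)]; rfl

lemma emb_mul (W : Set (List ℕ)) (u v : List ℕ) :
    emb W u * emb W v = emb W (u ++ v) := by
  show mwMul (emb W u) (emb W v) = emb W (u ++ v)
  by_cases hu : Fac W u
  · by_cases hv : Fac W v
    · unfold emb
      erw [dif_pos hu, dif_pos hv, mwMul_some_some]; rfl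
    · have huv : ¬ Fac W (u ++ v) := fun h =>
        hv (h.of_infix (List.suffix_append u v).isInfix)
      unfold emb
      erw [dif_neg hv, dif_neg huv, mwMul_none_right]
  · have huv : ¬ Fac W (u ++ v) := fun h =>
      hu (h.of_infix (List.prefix_append u v).isInfix)
    unfold emb
    erw [dif_neg hu, dif_neg huv, mwMul_none_left]

lemma prod_emb (W : Set (List ℕ)) (g : ℕ → List ℕ) (l : List ℕ) :
    (l.map (fun n => emb W (g n))).prod = emb W (l.flatMap g) := by
  induction l with
  | nil => simp [emb_nil]
  | cons a t ih => simp [List.prod_cons, ih, emb_mul]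

lemma emb_eq_of (W : Set (List ℕ)) {u w : List ℕ} (hw : Fac W w)
    (h : emb W u = emb W w) : u = w := by
  unfold emb at h
  erw [dif_pos hw] at h
  by_cases hu : Fac W u
  · erw [dif_pos hu] at h
    exact congrArg Subtype.val (Option.some.inj h)
  · erw [dif_neg hu] at h; exact absurd h (by simp)


def g1 (n : ℕ) : List ℕ := if n = 0 then [0] else if n = 1 then [1] else []

def g2 (n : ℕ) : List ℕ := if n = 0 then [0] else [1]

lemma g1_len_le (l : List ℕ) : (l.flatMap g1).length ≤ l.length := by
  induction l with
  | nil => simp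
  | cons a t ih =>
    rw [List.flatMap_cons, List.length_append, List.length_cons]
    have : (g1 a).length ≤ 1 := by unfold g1; split <;> [skip; split] <;> simp
    omega

lemma g2_len (l : List ℕ) : (l.flatMap g2).length = l.length := by
  induction l with
  | nil => simp
  | cons a t ih =>
    rw [List.flatMap_cons, List.length_append, List.length_cons, ih]
    have : (g2 a).length = 1 := by unfold g2; split <;> rfl
    omega

lemma g1_eq (l : List ℕ) (h : (l.flatMap g1).length = l.length) : l.flatMap g1 = l := by
  induction l with
  | nil => rfl
  | cons a t ih =>
    rw [List.flatMap_cons] at h ⊢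
    rw [List.length_append, List.length_cons] at h
    have hle := g1_len_le t
    have hga : (g1 a).length ≤ 1 := by unfold g1; split <;> [skip; split] <;> simp
    have h1 : (g1 a).length = 1 := by omega
    have h2 : (t.flatMap g1).length = t.length := by omega
    have ht := ih h2
    by_cases ha0 : a = 0
    · subst ha0; simp [g1, ht]
    · by_cases ha1 : a = 1
      · subst ha1; simp [g1, ht]
      · exfalso
        have : g1 a = [] := by simp [g1, ha0, ha1]
        rw [this] at h1
        simp at h1

/-- The word `xy²x` (here `x = 0`, `y = 1`, so `xy²x = [0,1,1,0]`) is an isoterm for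
`M(ab²a, a²b²)` (with `a = 0`, `b = 1`): the only word `v` with
`M(ab²a, a²b²) ⊨ xy²x ≈ v` is `xy²x` itself. -/
theorem xyyx_isoterm (v : List ℕ)
    (hsat : SatM (MWord ({[0, 1, 1, 0], [0, 0, 1, 1]} : Set (List ℕ))) [0, 1, 1, 0] v) :
    v = [0, 1, 1, 0] := by
  set W : Set (List ℕ) := {[0, 1, 1, 0], [0, 0, 1, 1]} with hWdef
  have hW : Fac W [0, 1, 1, 0] := Or.inr ⟨[0, 1, 1, 0], by simp [hWdef], List.infix_rfl⟩
  have key : ∀ g : ℕ → List ℕ, [0, 1, 1, 0].flatMap g = [0, 1, 1, 0] →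
      v.flatMap g = [0, 1, 1, 0] := by
    intro g hg
    have h := hsat (fun n => emb W (g n))
    rw [prod_emb, prod_emb, hg] at h
    exact emb_eq_of W hW h.symm
  have h1 : v.flatMap g1 = [0, 1, 1, 0] := key g1 (by simp [g1])
  have h2 : v.flatMap g2 = [0, 1, 1, 0] := key g2 (by simp [g2])
  have hl2 : v.length = 4 := by
    have := g2_len v
    rw [h2] at this
    simpa using this.symm
  have hl1 : (v.flatMap g1).length = v.length := by rw [h1, hl2]; rfl
  rw [← g1_eq v hl1, h1]
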